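/- A basis is reverse partially greedy (RPG) if and only if there exists C ≥ 1 such that ‖x − P_Λ(x)‖ ≤ C·σ̌^Λ_m(x) for all x ∈ X, m ∈ ℕ, and greedy sets Λ of x with |Λ| = m. -/

import Mathlib

open Finset Filter

noncomputable section

variable {X : Type*} [NormedAddCommGroup X] [NormedSpace ℝ X]

/-- Projection `P_A x = ∑_{n ∈ A} e_n^*(x) e_n`. -/
def proj (f : ℕ → X →L[ℝ] ℝ) (e : ℕ → X) (A : Finset ℕ) (x : X) : X :=
  ∑ n ∈ A, f n x • e n

/-- `Λ` is a greedy set of `x`. -/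
def GreedySet (f : ℕ → X →L[ℝ] ℝ) (x : X) (Λ : Finset ℕ) : Prop :=
  ∀ n ∈ Λ, ∀ m, m ∉ Λ → |f m x| ≤ |f n x|

/-- A (biorthogonal, norm-bounded, fundamental) basis system. -/
structure BasisSystem (f : ℕ → X →L[ℝ] ℝ) (e : ℕ → X) : Prop where
  biorth : ∀ n m, f n (e m) = if n = m then (1 : ℝ) else 0
  dense : Dense (Submodule.span ℝ (Set.range e) : Set X)
  bounded : ∃ c₁ c₂ : ℝ, 0 < c₁ ∧ ∀ n, c₁ ≤ ‖e n‖ ∧ ‖e n‖ ≤ c₂ ∧ ‖f n‖ ≤ c₂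

/-- `σ̌^Λ_m(x)`: inf of `‖x - P_I x‖` over `I = ∅` or intervals `I` with
`Λ ≤ max I` and `|I| ≤ m`. -/
def checkSigma (f : ℕ → X →L[ℝ] ℝ) (e : ℕ → X) (Λ : Finset ℕ) (m : ℕ) (x : X) : ℝ :=
  sInf {r : ℝ | ∃ I : Finset ℕ,
    (I = ∅ ∨ ∃ a b : ℕ, a ≤ b ∧ I = Finset.Icc a b ∧ ∀ n ∈ Λ, n ≤ b) ∧
    I.card ≤ m ∧ r = ‖x - proj f e I x‖}

/-- `σ̂^Λ_m(x)`: inf of `‖x - P_I x‖` over `I = ∅` or intervals `I` with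
`min I ≤ Λ` and `|I| ≤ m`. -/
def hatSigma (f : ℕ → X →L[ℝ] ℝ) (e : ℕ → X) (Λ : Finset ℕ) (m : ℕ) (x : X) : ℝ :=
  sInf {r : ℝ | ∃ I : Finset ℕ,
    (I = ∅ ∨ ∃ a b : ℕ, a ≤ b ∧ I = Finset.Icc a b ∧ ∀ n ∈ Λ, a ≤ n) ∧
    I.card ≤ m ∧ r = ‖x - proj f e I x‖}

/-- `σ̃^{R,Λ}_m(x)`: inf of `‖x - P_A x‖` over `|A| ≤ m`, `A > Λ`. -/
def revSigma (f : ℕ → X →L[ℝ] ℝ) (e : ℕ → X) (Λ : Finset ℕ) (m : ℕ) (x : X) : ℝ :=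
  sInf {r : ℝ | ∃ A : Finset ℕ, A.card ≤ m ∧ (∀ n ∈ Λ, ∀ a ∈ A, n < a) ∧
    r = ‖x - proj f e A x‖}

/-- Reverse partially greedy with constant `C`. -/
def RPG (f : ℕ → X →L[ℝ] ℝ) (e : ℕ → X) (C : ℝ) : Prop :=
  ∀ (x : X) (m : ℕ) (Λ : Finset ℕ), Λ.card = m → GreedySet f x Λ →
    ‖x - proj f e Λ x‖ ≤ C * revSigma f e Λ m x

/-- `(λ, RPGII)` with constant `C`. -/
def RPGII (f : ℕ → X →L[ℝ] ℝ) (e : ℕ → X) (l C : ℝ) : Prop :=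
  ∀ (x : X) (m : ℕ) (Λ : Finset ℕ), Λ.card = ⌈l * (m : ℝ)⌉₊ → GreedySet f x Λ →
    ‖x - proj f e Λ x‖ ≤ C * checkSigma f e Λ m x

/-- Quasi-greedy with constant `C`. -/
def QG (f : ℕ → X →L[ℝ] ℝ) (e : ℕ → X) (C : ℝ) : Prop :=
  ∀ (x : X) (Λ : Finset ℕ), GreedySet f x Λ → ‖proj f e Λ x‖ ≤ C * ‖x‖

/-- Suppression quasi-greedy with constant `C`. -/
def SuppQG (f : ℕ → X →L[ℝ] ℝ) (e : ℕ → X) (C : ℝ) : Prop :=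
  ∀ (x : X) (Λ : Finset ℕ), GreedySet f x Λ → ‖x - proj f e Λ x‖ ≤ C * ‖x‖

/-- Reverse conservative with constant `C`. -/
def RevConservative (e : ℕ → X) (C : ℝ) : Prop :=
  ∀ A B : Finset ℕ, (∀ b ∈ B, ∀ a ∈ A, b < a) → A.card ≤ B.card →
    ‖∑ n ∈ A, e n‖ ≤ C * ‖∑ n ∈ B, e n‖

/-- `s(A) = max A - min A + 1` (and `s(∅) = 0`). -/
def spread (A : Finset ℕ) : ℕ :=
  if h : A.Nonempty then A.max' h - A.min' h + 1 else 0

/-- `(λ, reverse conservative of type II)` with constant `C`. -/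
def RevConsII (e : ℕ → X) (l C : ℝ) : Prop :=
  ∀ A B : Finset ℕ, (l - 1) * spread A + (A.card : ℝ) ≤ (B.card : ℝ) →
    (∀ b ∈ B, ∀ a ∈ A, b < a) → ‖∑ n ∈ A, e n‖ ≤ C * ‖∑ n ∈ B, e n‖

/-- `x` surrounds `A`: `supp x ∩ [min A, max A] = ∅` (vacuous for `A = ∅`). -/
def Surrounds (f : ℕ → X →L[ℝ] ℝ) (x : X) (A : Finset ℕ) : Prop :=
  ∀ a ∈ A, ∀ b ∈ A, ∀ n, a ≤ n → n ≤ b → f n x = 0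

/-- `(λ, RPSLC)` with constant `Δ`. -/
def RPSLC (f : ℕ → X →L[ℝ] ℝ) (e : ℕ → X) (l Δ : ℝ) : Prop :=
  ∀ x : X, (∀ n, |f n x| ≤ 1) →
    ∀ ε δ : ℕ → ℝ, (∀ n, |ε n| = 1) → (∀ n, |δ n| = 1) →
    ∀ A B : Finset ℕ, (l - 1) * spread A + (A.card : ℝ) ≤ (B.card : ℝ) →
    (∀ n ∈ B, f n x = 0) → (∀ b ∈ B, ∀ a ∈ A, b < a) → Surrounds f x A →
    ‖x + ∑ n ∈ A, ε n • e n‖ ≤ Δ * ‖x + ∑ n ∈ B, δ n • e n‖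

section Aux
variable {f : ℕ → X →L[ℝ] ℝ} {e : ℕ → X}

lemma proj_empty (x : X) : proj f e ∅ x = 0 := by simp [proj]

lemma coeff_proj (hb : ∀ n m, f n (e m) = if n = m then (1 : ℝ) else 0)
    (A : Finset ℕ) (x : X) (k : ℕ) :
    f k (proj f e A x) = if k ∈ A then f k x else 0 := by
  simp only [proj, map_sum, map_smul, hb, smul_eq_mul, mul_ite, mul_one, mul_zero]
  rw [Finset.sum_ite_eq A k (fun n => f n x)]

lemma coeff_sub_proj (hb : ∀ n m, f n (e m) = if n = m then (1 : ℝ) else 0)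
    (A : Finset ℕ) (x : X) (k : ℕ) :
    f k (x - proj f e A x) = if k ∈ A then 0 else f k x := by
  rw [map_sub, coeff_proj hb]
  split <;> simp

lemma coeff_sum_ind (hb : ∀ n m, f n (e m) = if n = m then (1 : ℝ) else 0)
    (S : Finset ℕ) (k : ℕ) :
    f k (∑ n ∈ S, e n) = if k ∈ S then 1 else 0 := by
  rw [map_sum]
  simp only [hb]
  rw [Finset.sum_ite_eq S k (fun _ => (1:ℝ))]

lemma proj_of_sum (hb : ∀ n m, f n (e m) = if n = m then (1 : ℝ) else 0)
    (A S : Finset ℕ) :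
    proj f e A (∑ n ∈ S, e n) = ∑ n ∈ A ∩ S, e n := by
  unfold proj
  simp only [coeff_sum_ind hb, ite_smul, one_smul, zero_smul]
  rw [Finset.sum_ite_mem]


lemma greedy_of_indicator (hb : ∀ n m, f n (e m) = if n = m then (1 : ℝ) else 0)
    {S Λ : Finset ℕ} (hΛ : Λ ⊆ S) : GreedySet f (∑ n ∈ S, e n) Λ := by
  intro n hn m _
  rw [coeff_sum_ind hb, coeff_sum_ind hb, if_pos (hΛ hn)]
  split <;> simp

lemma norm_proj_le {C : ℝ} (hq : SuppQG f e C) {y : X} {S : Finset ℕ}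
    (hS : GreedySet f y S) : ‖proj f e S y‖ ≤ (1 + C) * ‖y‖ := by
  have h := hq y S hS
  calc ‖proj f e S y‖ = ‖y - (y - proj f e S y)‖ := by rw [sub_sub_cancel]
  _ ≤ ‖y‖ + ‖y - proj f e S y‖ := norm_sub_le _ _
  _ ≤ ‖y‖ + C * ‖y‖ := by linarith
  _ = (1 + C) * ‖y‖ := by ring

/-- flipping signs of a ±1 combination costs a factor 2C. -/
lemma sgn_flip (hb : ∀ n m, f n (e m) = if n = m then (1 : ℝ) else 0)
    {C : ℝ} (hq : SuppQG f e C) (D : Finset ℕ) (ε ε' : ℕ → ℝ)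
    (hε : ∀ n, ε n = 1 ∨ ε n = -1) (hε' : ∀ n, ε' n = 1 ∨ ε' n = -1) :
    ‖∑ n ∈ D, ε n • e n‖ ≤ (2 * C) * ‖∑ n ∈ D, ε' n • e n‖ := by
  set z := ∑ n ∈ D, ε' n • e n with hz
  have hcz : ∀ k, f k z = if k ∈ D then ε' k else 0 := by
    intro k
    rw [hz, map_sum]
    simp only [map_smul, hb, smul_eq_mul, mul_ite, mul_one, mul_zero]
    rw [Finset.sum_ite_eq D k (fun n => ε' n)]
  have habs : ∀ k, |f k z| ≤ 1 := by
    intro k; rw [hcz]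
    split
    · rcases hε' k with h | h <;> simp [h]
    · simp
  have hgr : ∀ T : Finset ℕ, T ⊆ D → GreedySet f z T := by
    intro T hT n hn m _
    have : |f n z| = 1 := by
      rw [hcz, if_pos (hT hn)]; rcases hε' n with h | h <;> simp [h]
    rw [this]; exact habs m
  have hprojT : ∀ T : Finset ℕ, T ⊆ D → proj f e T z = ∑ n ∈ T, ε' n • e n := by
    intro T hT
    unfold proj
    refine Finset.sum_congr rfl (fun n hn => ?_)
    rw [hcz, if_pos (hT hn)]
  set S := D.filter (fun n => ε n = ε' n) with hS
  set S' := D.filter (fun n => ¬ ε n = ε' n) with hS'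
  have hsub : S ⊆ D := Finset.filter_subset _ _
  have hsub' : S' ⊆ D := Finset.filter_subset _ _
  have h1 : ‖∑ n ∈ S, ε' n • e n‖ ≤ C * ‖z‖ := by
    have := hq z S' (hgr S' hsub')
    rw [hprojT S' hsub'] at this
    have hzs : z - ∑ n ∈ S', ε' n • e n = ∑ n ∈ S, ε' n • e n := by
      rw [hz, hS', hS, ← Finset.sum_filter_add_sum_filter_not D (fun n => ε n = ε' n)]
      abel
    rwa [hzs] at this
  have h2 : ‖∑ n ∈ S', ε' n • e n‖ ≤ C * ‖z‖ := by
    have := hq z S (hgr S hsub)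
    rw [hprojT S hsub] at this
    have hzs : z - ∑ n ∈ S, ε' n • e n = ∑ n ∈ S', ε' n • e n := by
      rw [hz, hS', hS, ← Finset.sum_filter_add_sum_filter_not D (fun n => ε n = ε' n)]
      abel
    rwa [hzs] at this
  have hdec : ∑ n ∈ D, ε n • e n = ∑ n ∈ S, ε' n • e n - ∑ n ∈ S', ε' n • e n := by
    rw [← Finset.sum_filter_add_sum_filter_not D (fun n => ε n = ε' n) (fun n => ε n • e n),
        ← hS, ← hS']
    have hA : ∑ n ∈ S, ε n • e n = ∑ n ∈ S, ε' n • e n :=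
      Finset.sum_congr rfl (fun n hn => by rw [(Finset.mem_filter.mp hn).2])
    have hB : ∑ n ∈ S', ε n • e n = -∑ n ∈ S', ε' n • e n := by
      rw [← Finset.sum_neg_distrib]
      refine Finset.sum_congr rfl (fun n hn => ?_)
      have hne := (Finset.mem_filter.mp hn).2
      rcases hε n with h | h <;> rcases hε' n with h' | h' <;>
        simp_all [neg_smul]
    rw [hA, hB]
    abel
  calc ‖∑ n ∈ D, ε n • e n‖ ≤ ‖∑ n ∈ S, ε' n • e n‖ + ‖∑ n ∈ S', ε' n • e n‖ := by
        rw [hdec]; exact norm_sub_le _ _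
  _ ≤ 2 * C * ‖z‖ := by linarith


lemma convex_norm_le {w u : X} {t α : ℝ} (h : |t| ≤ α) :
    ‖w + t • u‖ ≤ ‖w + α • u‖ ∨ ‖w + t • u‖ ≤ ‖w + (-α) • u‖ := by
  have hα : 0 ≤ α := le_trans (abs_nonneg t) h
  rcases eq_or_lt_of_le hα with h0 | h0
  · have ht : t = 0 := by
      have h1 := abs_nonneg t; have h2 := abs_le.mp h
      have : |t| = 0 := le_antisymm (h.trans h0.symm.le) h1
      exact abs_eq_zero.mp this
    left; rw [ht, ← h0]
  · set θ := (α + t) / (2 * α) with hθ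
    have h2 := abs_le.mp h
    have hθ0 : 0 ≤ θ := by apply div_nonneg <;> linarith
    have hθ1 : θ ≤ 1 := by rw [div_le_one (by linarith)]; linarith
    have hid : w + t • u = θ • (w + α • u) + (1 - θ) • (w + (-α) • u) := by
      match_scalars
      · ring
      · have hθ2 : θ * (2 * α) = α + t := by rw [hθ]; exact div_mul_cancel₀ _ (mul_pos two_pos h0).ne'
        field_simp [hθ]; linear_combination -hθ2
    have hb : ‖w + t • u‖ ≤ θ * ‖w + α • u‖ + (1 - θ) * ‖w + (-α) • u‖ := by
      rw [hid]
      refine (norm_add_le _ _).trans ?_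
      rw [norm_smul, norm_smul, Real.norm_eq_abs, Real.norm_eq_abs,
        abs_of_nonneg hθ0, abs_of_nonneg (by linarith)]
    rcases le_total ‖w + α • u‖ ‖w + (-α) • u‖ with hc | hc
    · right; nlinarith
    · left; nlinarith

lemma cube_vertex (e : ℕ → X) {α : ℝ} (hα : 0 ≤ α) (D : Finset ℕ) :
    ∀ (c : ℕ → ℝ), (∀ n ∈ D, |c n| ≤ α) → ∀ v : X,
    ∃ ε : ℕ → ℝ, (∀ n, ε n = 1 ∨ ε n = -1) ∧
      ‖v + ∑ n ∈ D, c n • e n‖ ≤ ‖v + ∑ n ∈ D, (α * ε n) • e n‖ := by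
  induction D using Finset.induction_on with
  | empty => intro c _ v; exact ⟨fun _ => 1, fun _ => Or.inl rfl, by simp⟩
  | @insert a s ha ih =>
    intro c hc v
    obtain ⟨ε, hε, hle⟩ := ih c (fun n hn => hc n (Finset.mem_insert_of_mem hn))
      (v + c a • e a)
    have hca : |c a| ≤ α := hc a (Finset.mem_insert_self a s)
    set w := v + ∑ n ∈ s, (α * ε n) • e n with hw
    have h1 : v + ∑ n ∈ insert a s, c n • e n
        = (v + c a • e a) + ∑ n ∈ s, c n • e n := by
      rw [Finset.sum_insert ha]; abel
    rcases convex_norm_le (w := w) (u := e a) hca with hcase | hcase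
    · refine ⟨Function.update ε a 1, ?_, ?_⟩
      · intro n
        rcases eq_or_ne n a with rfl | hne
        · left; simp [Function.update_self]
        · rw [Function.update_of_ne hne]; exact hε n
      · rw [h1, Finset.sum_insert ha]
        have hs : ∑ n ∈ s, (α * Function.update ε a 1 n) • e n
            = ∑ n ∈ s, (α * ε n) • e n :=
          Finset.sum_congr rfl (fun n hn => by
            rw [Function.update_of_ne (ne_of_mem_of_not_mem hn ha)])
        rw [hs, Function.update_self, mul_one]
        calc ‖(v + c a • e a) + ∑ n ∈ s, c n • e n‖
            ≤ ‖w + c a • e a‖ := by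
              have : w + c a • e a = (v + c a • e a) + ∑ n ∈ s, (α * ε n) • e n := by
                rw [hw]; abel
              rw [this]; exact hle
        _ ≤ ‖w + α • e a‖ := hcase
        _ = ‖v + (α • e a + ∑ n ∈ s, (α * ε n) • e n)‖ := by
              rw [hw]; ring_nf; rw [show w + α • e a = v + (α • e a + ∑ n ∈ s, (α * ε n) • e n) from by rw [hw]; abel]
    · refine ⟨Function.update ε a (-1), ?_, ?_⟩
      · intro n
        rcases eq_or_ne n a with rfl | hne
        · right; simp [Function.update_self]
        · rw [Function.update_of_ne hne]; exact hε n
      · rw [h1, Finset.sum_insert ha]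
        have hs : ∑ n ∈ s, (α * Function.update ε a (-1) n) • e n
            = ∑ n ∈ s, (α * ε n) • e n :=
          Finset.sum_congr rfl (fun n hn => by
            rw [Function.update_of_ne (ne_of_mem_of_not_mem hn ha)])
        rw [hs, Function.update_self]
        calc ‖(v + c a • e a) + ∑ n ∈ s, c n • e n‖
            ≤ ‖w + c a • e a‖ := by
              have : w + c a • e a = (v + c a • e a) + ∑ n ∈ s, (α * ε n) • e n := by
                rw [hw]; abel
              rw [this]; exact hle
        _ ≤ ‖w + (-α) • e a‖ := hcase
        _ = ‖v + ((α * (-1)) • e a + ∑ n ∈ s, (α * ε n) • e n)‖ := by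
              rw [show w + (-α) • e a = v + ((α * (-1)) • e a + ∑ n ∈ s, (α * ε n) • e n) from by rw [hw]; module]


lemma inf'_le_sup'' (B : Finset ℕ) (hB : B.Nonempty) (g : ℕ → ℝ) :
    B.inf' hB g ≤ B.sup' hB g := by
  obtain ⟨n, hn⟩ := hB
  exact le_trans (Finset.inf'_le _ hn) (Finset.le_sup' _ hn)

/-- Abel-summation induction for the truncation estimate. -/
lemma trunc_aux {C : ℝ} (hq : SuppQG f e C) (hC : 0 ≤ C) (y : X) :
    ∀ (k : ℕ) (B : Finset ℕ) (hB : B.Nonempty), B.card = k → GreedySet f y B →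
    (∀ n ∈ B, 0 < |f n y|) →
    ‖(∑ n ∈ B, (if f n y < 0 then (-1:ℝ) else 1) • e n) -
        (B.inf' hB (fun n => |f n y|))⁻¹ • proj f e B y‖ ≤
      ((B.inf' hB fun n => |f n y|)⁻¹ - (B.sup' hB fun n => |f n y|)⁻¹)
        * ((1 + C) * ‖y‖) := by
  intro k
  induction k with
  | zero =>
    intro B hB hcard
    exact absurd (Finset.card_eq_zero.mp hcard) (Finset.nonempty_iff_ne_empty.mp hB)
  | succ k ih =>
    intro B hB hcard hgr hpos
    obtain ⟨n₀, hn₀, hmin⟩ := Finset.exists_mem_eq_inf' hB (fun n => |f n y|)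
    set g : ℕ → ℝ := fun n => |f n y| with hg
    set m : ℝ := B.inf' hB g with hm
    set M : ℝ := B.sup' hB g with hM
    have hm_pos : 0 < m := by rw [hmin]; exact hpos n₀ hn₀
    have hM_ge : m ≤ M := inf'_le_sup'' _ _ _
    have hM_pos : 0 < M := lt_of_lt_of_le hm_pos hM_ge
    have hzero : (if f n₀ y < 0 then (-1:ℝ) else 1) - m⁻¹ * f n₀ y = 0 := by
      have hmg : m = |f n₀ y| := hmin
      rcases lt_or_ge (f n₀ y) 0 with hneg | hnn
      · rw [if_pos hneg, hmg, abs_of_neg hneg]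
        have hne : f n₀ y ≠ 0 := ne_of_lt hneg
        rw [inv_neg, neg_mul, sub_neg_eq_add, inv_mul_cancel₀ hne]
        ring
      · rw [if_neg (not_lt.mpr hnn), hmg, abs_of_nonneg hnn]
        have hne : f n₀ y ≠ 0 := by
          intro h; have := hpos n₀ hn₀; rw [h] at this; simp at this
        rw [inv_mul_cancel₀ hne]
        ring
    set B' := B.erase n₀ with hB'
    have hTB : (∑ n ∈ B, (if f n y < 0 then (-1:ℝ) else 1) • e n)
        = (∑ n ∈ B', (if f n y < 0 then (-1:ℝ) else 1) • e n)
          + (if f n₀ y < 0 then (-1:ℝ) else 1) • e n₀ :=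
      (Finset.sum_erase_add B _ hn₀).symm
    have hPB : proj f e B y = proj f e B' y + (f n₀ y) • e n₀ :=
      (Finset.sum_erase_add B _ hn₀).symm
    rcases Finset.eq_empty_or_nonempty B' with hBe | hB'ne
    · -- B = {n₀}
      have hBsing : B = {n₀} := by
        rcases (Finset.erase_eq_empty_iff B n₀).mp hBe with h | h
        · exact absurd h (Finset.nonempty_iff_ne_empty.mp hB)
        · exact h
      have hs0 : (∑ n ∈ B', (if f n y < 0 then (-1:ℝ) else 1) • e n) = 0 := by
        rw [hBe]; simp
      have hp0 : proj f e B' y = 0 := by rw [hBe]; exact proj_empty y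
      have hvec : (∑ n ∈ B, (if f n y < 0 then (-1:ℝ) else 1) • e n)
          - m⁻¹ • proj f e B y = 0 := by
        rw [hTB, hPB, hs0, hp0, zero_add, zero_add, smul_smul, ← sub_smul, hzero,
          zero_smul]
      have hMm : M ≤ m := by
        refine Finset.sup'_le _ _ (fun n hn => ?_)
        rw [hBsing, Finset.mem_singleton] at hn
        subst hn
        exact le_of_eq hmin.symm
      have hmM : m = M := le_antisymm hM_ge hMm
      rw [hvec, norm_zero, ← hmM, sub_self, zero_mul]
    · -- inductive step
      have hn₀B' : n₀ ∉ B' := Finset.notMem_erase _ _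
      have hsub : B' ⊆ B := Finset.erase_subset _ _
      have hcard' : B'.card = k := by
        rw [hB', Finset.card_erase_of_mem hn₀, hcard]; rfl
      have hgr' : GreedySet f y B' := by
        intro n hn mm hmm
        rcases eq_or_ne mm n₀ with rfl | hne
        · calc |f mm y| = m := hmin.symm
          _ ≤ g n := Finset.inf'_le _ (hsub hn)
        · exact hgr n (hsub hn) mm (fun h => hmm (Finset.mem_erase.mpr ⟨hne, h⟩))
      have hpos' : ∀ n ∈ B', 0 < |f n y| := fun n hn => hpos n (hsub hn)
      set m' : ℝ := B'.inf' hB'ne g with hm'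
      set M' : ℝ := B'.sup' hB'ne g with hM'
      have hm'_pos : 0 < m' := by
        obtain ⟨n₁, hn₁, h₁⟩ := Finset.exists_mem_eq_inf' hB'ne g
        rw [hm', h₁]; exact hpos' n₁ hn₁
      have hmm' : m ≤ m' := Finset.le_inf' _ _ (fun n hn => Finset.inf'_le _ (hsub hn))
      have hMM' : M' ≤ M := Finset.sup'_le _ _ (fun n hn => Finset.le_sup' _ (hsub hn))
      have hM'_pos : 0 < M' := lt_of_lt_of_le hm'_pos (inf'_le_sup'' _ _ _)
      have hP' : ‖proj f e B' y‖ ≤ (1 + C) * ‖y‖ := norm_proj_le hq hgr'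
      have hIH := ih B' hB'ne hcard' hgr' hpos'
      have hkey : (∑ n ∈ B, (if f n y < 0 then (-1:ℝ) else 1) • e n) - m⁻¹ • proj f e B y
          = ((∑ n ∈ B', (if f n y < 0 then (-1:ℝ) else 1) • e n) - m'⁻¹ • proj f e B' y)
            + (m'⁻¹ - m⁻¹) • proj f e B' y
            + ((if f n₀ y < 0 then (-1:ℝ) else 1) - m⁻¹ * f n₀ y) • e n₀ := by
        rw [hTB, hPB]
        module
      rw [hkey, hzero, zero_smul, add_zero]
      have h1 : ‖(m'⁻¹ - m⁻¹) • proj f e B' y‖ ≤ (m⁻¹ - m'⁻¹) * ((1 + C) * ‖y‖) := by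
        rw [norm_smul, Real.norm_eq_abs, abs_of_nonpos (by
          have : m⁻¹ ≥ m'⁻¹ := one_div m' ▸ one_div m ▸ one_div_le_one_div_of_le hm_pos hmm'
          linarith)]
        have hnn : 0 ≤ m⁻¹ - m'⁻¹ := by
          have : m'⁻¹ ≤ m⁻¹ := one_div m' ▸ one_div m ▸ one_div_le_one_div_of_le hm_pos hmm'
          linarith
        calc (-(m'⁻¹ - m⁻¹)) * ‖proj f e B' y‖ = (m⁻¹ - m'⁻¹) * ‖proj f e B' y‖ := by ring
        _ ≤ (m⁻¹ - m'⁻¹) * ((1 + C) * ‖y‖) := by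
            apply mul_le_mul_of_nonneg_left hP' hnn
      have hMinv : M⁻¹ ≤ M'⁻¹ := one_div M ▸ one_div M' ▸ one_div_le_one_div_of_le hM'_pos hMM'
      calc ‖((∑ n ∈ B', (if f n y < 0 then (-1:ℝ) else 1) • e n) - m'⁻¹ • proj f e B' y)
            + (m'⁻¹ - m⁻¹) • proj f e B' y‖
          ≤ ‖(∑ n ∈ B', (if f n y < 0 then (-1:ℝ) else 1) • e n) - m'⁻¹ • proj f e B' y‖
            + ‖(m'⁻¹ - m⁻¹) • proj f e B' y‖ := norm_add_le _ _
      _ ≤ (m'⁻¹ - M'⁻¹) * ((1 + C) * ‖y‖) + (m⁻¹ - m'⁻¹) * ((1 + C) * ‖y‖) := by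
          exact add_le_add hIH h1
      _ = (m⁻¹ - M'⁻¹) * ((1 + C) * ‖y‖) := by ring
      _ ≤ (m⁻¹ - M⁻¹) * ((1 + C) * ‖y‖) := by
          have hy : 0 ≤ (1 + C) * ‖y‖ := mul_nonneg (by linarith) (norm_nonneg _)
          nlinarith

/-- the truncation estimate. -/
lemma trunc {C : ℝ} (hq : SuppQG f e C) (hC : 0 ≤ C) (y : X) (B : Finset ℕ)
    (hgr : GreedySet f y B) {α : ℝ} (hα : 0 < α) (hmin : ∀ n ∈ B, α ≤ |f n y|) :
    α * ‖∑ n ∈ B, (if f n y < 0 then (-1:ℝ) else 1) • e n‖ ≤ 2 * (1 + C) * ‖y‖ := by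
  rcases Finset.eq_empty_or_nonempty B with rfl | hB
  · simp
    positivity
  · have hpos : ∀ n ∈ B, 0 < |f n y| := fun n hn => lt_of_lt_of_le hα (hmin n hn)
    set g : ℕ → ℝ := fun n => |f n y| with hg
    set m : ℝ := B.inf' hB g with hm
    set M : ℝ := B.sup' hB g with hM
    have hm_pos : 0 < m := by
      obtain ⟨n₁, hn₁, h₁⟩ := Finset.exists_mem_eq_inf' hB g
      rw [hm, h₁]; exact hpos n₁ hn₁
    have hM_pos : 0 < M := lt_of_lt_of_le hm_pos (inf'_le_sup'' _ _ _)
    have hαm : α ≤ m := Finset.le_inf' _ _ (fun n hn => hmin n hn)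
    have haux := trunc_aux hq hC y B.card B hB rfl hgr hpos
    have hPB : ‖proj f e B y‖ ≤ (1 + C) * ‖y‖ := norm_proj_le hq hgr
    have hT : ‖∑ n ∈ B, (if f n y < 0 then (-1:ℝ) else 1) • e n‖
        ≤ (2 * m⁻¹) * ((1 + C) * ‖y‖) := by
      calc ‖∑ n ∈ B, (if f n y < 0 then (-1:ℝ) else 1) • e n‖
          ≤ ‖(∑ n ∈ B, (if f n y < 0 then (-1:ℝ) else 1) • e n) - m⁻¹ • proj f e B y‖
            + ‖m⁻¹ • proj f e B y‖ := by
            have hh := norm_add_le ((∑ n ∈ B, (if f n y < 0 then (-1:ℝ) else 1) • e n)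
                - m⁻¹ • proj f e B y) (m⁻¹ • proj f e B y)
            rwa [sub_add_cancel] at hh
      _ ≤ (m⁻¹ - M⁻¹) * ((1 + C) * ‖y‖) + m⁻¹ * ((1 + C) * ‖y‖) := by
          refine add_le_add haux ?_
          rw [norm_smul, Real.norm_eq_abs, abs_of_pos (inv_pos.mpr hm_pos)]
          exact mul_le_mul_of_nonneg_left hPB (le_of_lt (inv_pos.mpr hm_pos))
      _ ≤ (2 * m⁻¹) * ((1 + C) * ‖y‖) := by
          have : 0 < M⁻¹ := inv_pos.mpr hM_pos
          have hy : 0 ≤ (1 + C) * ‖y‖ := mul_nonneg (by linarith) (norm_nonneg _)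
          nlinarith
    calc α * ‖∑ n ∈ B, (if f n y < 0 then (-1:ℝ) else 1) • e n‖
        ≤ α * ((2 * m⁻¹) * ((1 + C) * ‖y‖)) :=
          mul_le_mul_of_nonneg_left hT (le_of_lt hα)
    _ = (α * m⁻¹) * (2 * (1 + C) * ‖y‖) := by ring
    _ ≤ 1 * (2 * (1 + C) * ‖y‖) := by
        have h1 : α * m⁻¹ ≤ 1 := by
          rw [← div_eq_mul_inv, div_le_one hm_pos]; exact hαm
        have hy : 0 ≤ 2 * (1 + C) * ‖y‖ := by positivity
        nlinarith
    _ = 2 * (1 + C) * ‖y‖ := one_mul _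


/-- The key estimate: coefficients dominated by a greedy set below can be bounded. -/
lemma main_est (hbi : ∀ n m, f n (e m) = if n = m then (1 : ℝ) else 0)
    {C : ℝ} (hC : 1 ≤ C) (hq : SuppQG f e C) (hrc : RevConservative e C)
    (y : X) (B D : Finset ℕ) (hgB : GreedySet f y B)
    (hlt : ∀ b ∈ B, ∀ d ∈ D, b < d) (hcard : D.card ≤ B.card) (c : ℕ → ℝ)
    (hc : ∀ n ∈ D, ∀ k ∈ B, |c n| ≤ |f k y|) :
    ‖∑ n ∈ D, c n • e n‖ ≤ 8 * C ^ 3 * (1 + C) * ‖y‖ := by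
  have hC0 : (0:ℝ) ≤ C := by linarith
  have hRHS : (0:ℝ) ≤ 8 * C ^ 3 * (1 + C) * ‖y‖ := by positivity
  rcases Finset.eq_empty_or_nonempty B with rfl | hB
  · have hD : D = ∅ := Finset.card_eq_zero.mp (Nat.le_zero.mp hcard)
    rw [hD]; simpa using hRHS
  set g : ℕ → ℝ := fun k => |f k y| with hg
  set α : ℝ := B.inf' hB g with hα
  have hα0 : (0:ℝ) ≤ α := by
    obtain ⟨n₁, hn₁, h₁⟩ := Finset.exists_mem_eq_inf' hB g
    rw [hα, h₁]; exact abs_nonneg _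
  have hcD : ∀ n ∈ D, |c n| ≤ α :=
    fun n hn => Finset.le_inf' _ _ (fun k hk => hc n hn k hk)
  obtain ⟨ε, hε, hεle⟩ := cube_vertex e hα0 D c hcD 0
  rw [zero_add, zero_add] at hεle
  have hsm : ∑ n ∈ D, (α * ε n) • e n = α • ∑ n ∈ D, ε n • e n := by
    rw [Finset.smul_sum]
    exact Finset.sum_congr rfl (fun n hn => by rw [smul_smul])
  have h1 : ‖∑ n ∈ D, c n • e n‖ ≤ α * ‖∑ n ∈ D, ε n • e n‖ := by
    calc ‖∑ n ∈ D, c n • e n‖ ≤ ‖∑ n ∈ D, (α * ε n) • e n‖ := hεle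
    _ = α * ‖∑ n ∈ D, ε n • e n‖ := by
        rw [hsm, norm_smul, Real.norm_eq_abs, abs_of_nonneg hα0]
  have h2 : ‖∑ n ∈ D, ε n • e n‖ ≤ 2 * C * ‖∑ n ∈ D, e n‖ := by
    have := sgn_flip hbi hq D ε (fun _ => 1) hε (fun _ => Or.inl rfl)
    simpa using this
  have h3 : ‖∑ n ∈ D, e n‖ ≤ C * ‖∑ n ∈ B, e n‖ := hrc D B hlt hcard
  set σ : ℕ → ℝ := fun n => if f n y < 0 then (-1:ℝ) else 1 with hσ
  have hσpm : ∀ n, σ n = 1 ∨ σ n = -1 := by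
    intro n; rw [hσ]; dsimp only; split
    · exact Or.inr rfl
    · exact Or.inl rfl
  have h4 : ‖∑ n ∈ B, e n‖ ≤ 2 * C * ‖∑ n ∈ B, σ n • e n‖ := by
    have := sgn_flip hbi hq B (fun _ => 1) σ (fun _ => Or.inl rfl) hσpm
    simpa using this
  rcases eq_or_lt_of_le hα0 with hα0' | hαpos
  · -- α = 0 : all coefficients vanish
    have hc0 : ∀ n ∈ D, c n • e n = 0 := by
      intro n hn
      have := hcD n hn
      rw [← hα0'] at this
      have : c n = 0 := abs_eq_zero.mp (le_antisymm this (abs_nonneg _))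
      rw [this, zero_smul]
    rw [Finset.sum_congr rfl hc0, Finset.sum_const, smul_zero]
    simpa using hRHS
  · have h5 : α * ‖∑ n ∈ B, σ n • e n‖ ≤ 2 * (1 + C) * ‖y‖ := by
      refine trunc hq hC0 y B hgB hαpos (fun n hn => ?_)
      exact Finset.inf'_le _ hn
    have hn2 : (0:ℝ) ≤ ‖∑ n ∈ D, e n‖ := norm_nonneg _
    have hn3 : (0:ℝ) ≤ ‖∑ n ∈ B, e n‖ := norm_nonneg _
    have hn4 : (0:ℝ) ≤ ‖∑ n ∈ B, σ n • e n‖ := norm_nonneg _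
    calc ‖∑ n ∈ D, c n • e n‖ ≤ α * ‖∑ n ∈ D, ε n • e n‖ := h1
    _ ≤ α * (2 * C * ‖∑ n ∈ D, e n‖) :=
        mul_le_mul_of_nonneg_left h2 hα0
    _ ≤ α * (2 * C * (C * ‖∑ n ∈ B, e n‖)) := by
        refine mul_le_mul_of_nonneg_left ?_ hα0
        refine mul_le_mul_of_nonneg_left h3 (by positivity)
    _ ≤ α * (2 * C * (C * (2 * C * ‖∑ n ∈ B, σ n • e n‖))) := by
        refine mul_le_mul_of_nonneg_left ?_ hα0
        refine mul_le_mul_of_nonneg_left ?_ (by positivity)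
        refine mul_le_mul_of_nonneg_left h4 hC0
    _ = (4 * C ^ 3) * (α * ‖∑ n ∈ B, σ n • e n‖) := by ring
    _ ≤ (4 * C ^ 3) * (2 * (1 + C) * ‖y‖) :=
        mul_le_mul_of_nonneg_left h5 (by positivity)
    _ = 8 * C ^ 3 * (1 + C) * ‖y‖ := by ring

lemma csInf_le_of_mem' {S : Set ℝ} (h0 : ∀ r ∈ S, 0 ≤ r) {r : ℝ} (hr : r ∈ S) :
    sInf S ≤ r := csInf_le ⟨0, fun x hx => h0 x hx⟩ hr

lemma le_mul_csInf {S : Set ℝ} (hne : S.Nonempty) {u C' : ℝ} (hC' : 0 < C')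
    (h : ∀ r ∈ S, u ≤ C' * r) : u ≤ C' * sInf S := by
  have h1 : u / C' ≤ sInf S :=
    le_csInf hne (fun r hr => (div_le_iff₀ hC').mpr (by rw [mul_comm]; exact h r hr))
  calc u = C' * (u / C') := by field_simp
  _ ≤ C' * sInf S := mul_le_mul_of_nonneg_left h1 (le_of_lt hC')

lemma checkSigma_nonneg_mem (Λ : Finset ℕ) (m : ℕ) (x : X) :
    ∀ r ∈ {r : ℝ | ∃ I : Finset ℕ,
      (I = ∅ ∨ ∃ a b : ℕ, a ≤ b ∧ I = Finset.Icc a b ∧ ∀ n ∈ Λ, n ≤ b) ∧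
      I.card ≤ m ∧ r = ‖x - proj f e I x‖}, 0 ≤ r := by
  rintro r ⟨I, -, -, rfl⟩; exact norm_nonneg _

lemma checkSigma_le_norm (Λ : Finset ℕ) (m : ℕ) (x : X) :
    checkSigma f e Λ m x ≤ ‖x‖ := by
  refine csInf_le_of_mem' (checkSigma_nonneg_mem Λ m x) ?_
  exact ⟨∅, Or.inl rfl, by simp, by rw [proj_empty, sub_zero]⟩

lemma revSigma_nonneg_mem (Λ : Finset ℕ) (m : ℕ) (x : X) :
    ∀ r ∈ {r : ℝ | ∃ A : Finset ℕ, A.card ≤ m ∧ (∀ n ∈ Λ, ∀ a ∈ A, n < a) ∧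
      r = ‖x - proj f e A x‖}, 0 ≤ r := by
  rintro r ⟨A, -, -, rfl⟩; exact norm_nonneg _

lemma revSigma_le_norm (Λ : Finset ℕ) (m : ℕ) (x : X) :
    revSigma f e Λ m x ≤ ‖x‖ := by
  refine csInf_le_of_mem' (revSigma_nonneg_mem Λ m x) ?_
  exact ⟨∅, by simp, by simp, by rw [proj_empty, sub_zero]⟩

lemma suppQG_of_rpg {C : ℝ} (hC : 1 ≤ C) (h : RPG f e C) : SuppQG f e C := by
  intro x Λ hgr
  calc ‖x - proj f e Λ x‖ ≤ C * revSigma f e Λ Λ.card x := h x Λ.card Λ rfl hgr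
  _ ≤ C * ‖x‖ := mul_le_mul_of_nonneg_left (revSigma_le_norm Λ Λ.card x) (by linarith)

lemma suppQG_of_check {C : ℝ} (hC : 1 ≤ C)
    (h : ∀ (x : X) (m : ℕ) (Λ : Finset ℕ), Λ.card = m → GreedySet f x Λ →
      ‖x - proj f e Λ x‖ ≤ C * checkSigma f e Λ m x) : SuppQG f e C := by
  intro x Λ hgr
  calc ‖x - proj f e Λ x‖ ≤ C * checkSigma f e Λ Λ.card x := h x Λ.card Λ rfl hgr
  _ ≤ C * ‖x‖ := mul_le_mul_of_nonneg_left (checkSigma_le_norm Λ Λ.card x) (by linarith)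

lemma revcons_of_rpg (hbi : ∀ n m, f n (e m) = if n = m then (1 : ℝ) else 0)
    {C : ℝ} (hC : 1 ≤ C) (h : RPG f e C) : RevConservative e C := by
  intro A B hlt hcard
  have hdisj : Disjoint A B := by
    rw [Finset.disjoint_left]
    intro n hnA hnB
    exact absurd (hlt n hnB n hnA) (lt_irrefl n)
  set x : X := ∑ n ∈ A ∪ B, e n with hx
  have hgr : GreedySet f x B := greedy_of_indicator hbi Finset.subset_union_right
  have hPB : proj f e B x = ∑ n ∈ B, e n := by
    rw [hx, proj_of_sum hbi, Finset.inter_eq_left.mpr Finset.subset_union_right]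
  have hPA : proj f e A x = ∑ n ∈ A, e n := by
    rw [hx, proj_of_sum hbi, Finset.inter_eq_left.mpr Finset.subset_union_left]
  have hxsplit : x = (∑ n ∈ A, e n) + ∑ n ∈ B, e n := by
    rw [hx, Finset.sum_union hdisj]
  have h1 : ‖x - proj f e B x‖ ≤ C * revSigma f e B B.card x := h x B.card B rfl hgr
  have h2 : revSigma f e B B.card x ≤ ‖x - proj f e A x‖ :=
    csInf_le_of_mem' (revSigma_nonneg_mem B B.card x) ⟨A, hcard, hlt, rfl⟩
  have e1 : x - proj f e B x = ∑ n ∈ A, e n := by rw [hPB, hxsplit]; abel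
  have e2 : x - proj f e A x = ∑ n ∈ B, e n := by rw [hPA, hxsplit]; abel
  rw [e1] at h1
  rw [e2] at h2
  calc ‖∑ n ∈ A, e n‖ ≤ C * revSigma f e B B.card x := h1
  _ ≤ C * ‖∑ n ∈ B, e n‖ := mul_le_mul_of_nonneg_left h2 (by linarith)

lemma revcons_of_check (hbi : ∀ n m, f n (e m) = if n = m then (1 : ℝ) else 0)
    {C : ℝ} (hC : 1 ≤ C)
    (h : ∀ (x : X) (m : ℕ) (Λ : Finset ℕ), Λ.card = m → GreedySet f x Λ →
      ‖x - proj f e Λ x‖ ≤ C * checkSigma f e Λ m x) : RevConservative e C := by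
  intro A B hlt hcard
  rcases Finset.eq_empty_or_nonempty A with rfl | hA
  · simp only [Finset.sum_empty, norm_zero]
    positivity
  set a : ℕ := A.min' hA with ha
  set b : ℕ := A.max' hA with hbdef
  have hab : a ≤ b := A.min'_le b (A.max'_mem hA)
  have hAI : A ⊆ Finset.Icc a b := by
    intro n hn
    rw [Finset.mem_Icc]
    exact ⟨Finset.min'_le _ _ hn, Finset.le_max' _ _ hn⟩
  set D : Finset ℕ := Finset.Icc a b \ A with hD
  set Λ : Finset ℕ := B ∪ D with hΛ
  have hBlt : ∀ β ∈ B, β < a := fun β hβ => hlt β hβ a (A.min'_mem hA)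
  have hdisjBI : Disjoint B (Finset.Icc a b) := by
    rw [Finset.disjoint_left]
    intro n hnB hnI
    exact absurd (Finset.mem_Icc.mp hnI).1 (not_le.mpr (hBlt n hnB))
  have hdisjBD : Disjoint B D :=
    Finset.disjoint_of_subset_right (Finset.sdiff_subset) hdisjBI
  have hdisjΛA : Disjoint Λ A := by
    rw [hΛ, Finset.disjoint_union_left]
    constructor
    · exact Finset.disjoint_of_subset_right hAI hdisjBI
    · exact Finset.sdiff_disjoint
  set x : X := ∑ n ∈ B ∪ Finset.Icc a b, e n with hx
  have hΛsub : Λ ⊆ B ∪ Finset.Icc a b :=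
    Finset.union_subset_union (le_refl B) Finset.sdiff_subset
  have hgr : GreedySet f x Λ := greedy_of_indicator hbi hΛsub
  have hDA : D ∪ A = Finset.Icc a b := by
    rw [hD, Finset.sdiff_union_of_subset hAI]
  have hPΛ : proj f e Λ x = ∑ n ∈ Λ, e n := by
    rw [hx, proj_of_sum hbi, Finset.inter_eq_left.mpr hΛsub]
  have hPI : proj f e (Finset.Icc a b) x = ∑ n ∈ Finset.Icc a b, e n := by
    rw [hx, proj_of_sum hbi, Finset.inter_eq_left.mpr Finset.subset_union_right]
  have hxsplit : x = (∑ n ∈ Λ, e n) + ∑ n ∈ A, e n := by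
    rw [hx, ← Finset.sum_union hdisjΛA]
    congr 1
    rw [hΛ, Finset.union_assoc, hDA]
  have hxsplit2 : x = (∑ n ∈ B, e n) + ∑ n ∈ Finset.Icc a b, e n := by
    rw [hx, Finset.sum_union hdisjBI]
  have e1 : x - proj f e Λ x = ∑ n ∈ A, e n := by rw [hPΛ, hxsplit]; abel
  have e2 : x - proj f e (Finset.Icc a b) x = ∑ n ∈ B, e n := by
    rw [hPI, hxsplit2]; abel
  have hcardI : (Finset.Icc a b).card ≤ Λ.card := by
    rw [hΛ, Finset.card_union_of_disjoint hdisjBD, ← hDA,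
      Finset.card_union_of_disjoint (Finset.sdiff_disjoint)]
    have h5 := Finset.card_le_card hAI
    have hkl : (Finset.Icc a b \ A).card = D.card := by rw [hD]
    omega
  have hIvalid : ∀ n ∈ Λ, n ≤ b := by
    intro n hn
    rcases Finset.mem_union.mp hn with hnB | hnD
    · exact le_of_lt (lt_of_lt_of_le (hBlt n hnB) hab)
    · exact (Finset.mem_Icc.mp (Finset.sdiff_subset hnD)).2
  have h1 : ‖x - proj f e Λ x‖ ≤ C * checkSigma f e Λ Λ.card x := h x Λ.card Λ rfl hgr
  have h2 : checkSigma f e Λ Λ.card x ≤ ‖x - proj f e (Finset.Icc a b) x‖ :=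
    csInf_le_of_mem' (checkSigma_nonneg_mem Λ Λ.card x)
      ⟨Finset.Icc a b, Or.inr ⟨a, b, hab, rfl, hIvalid⟩, hcardI, rfl⟩
  rw [e1] at h1
  rw [e2] at h2
  calc ‖∑ n ∈ A, e n‖ ≤ C * checkSigma f e Λ Λ.card x := h1
  _ ≤ C * ‖∑ n ∈ B, e n‖ := mul_le_mul_of_nonneg_left h2 (by linarith)


/-- Forward: SuppQG + RevConservative imply the interval (checkSigma) bound. -/
lemma forward_dir (hbi : ∀ n m, f n (e m) = if n = m then (1 : ℝ) else 0)
    {C : ℝ} (hC : 1 ≤ C) (hq : SuppQG f e C) (hrc : RevConservative e C) :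
    ∀ (x : X) (m : ℕ) (Λ : Finset ℕ), Λ.card = m → GreedySet f x Λ →
      ‖x - proj f e Λ x‖ ≤ (C + 8 * C ^ 3 * (1 + C)) * checkSigma f e Λ m x := by
  intro x m Λ hm hgr
  set C' : ℝ := C + 8 * C ^ 3 * (1 + C) with hC'
  have hC'pos : 0 < C' := by rw [hC']; positivity
  refine le_mul_csInf ?_ hC'pos ?_
  · exact ⟨‖x - proj f e ∅ x‖, ∅, Or.inl rfl, by simp, rfl⟩
  rintro r ⟨I, hIcond, hIcard, rfl⟩
  rcases hIcond with rfl | ⟨a, b, hab, rfl, hΛb⟩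
  · rw [proj_empty, sub_zero]
    calc ‖x - proj f e Λ x‖ ≤ C * ‖x‖ := hq x Λ hgr
    _ ≤ C' * ‖x‖ := by
        refine mul_le_mul_of_nonneg_right ?_ (norm_nonneg _)
        rw [hC']; nlinarith [pow_nonneg (by linarith : (0:ℝ) ≤ C) 3]
  · set I : Finset ℕ := Finset.Icc a b with hI
    set y : X := x - proj f e I x with hy
    set Λ₂ : Finset ℕ := Λ \ I with hΛ₂
    set D : Finset ℕ := I \ Λ with hDdef
    have hcy : ∀ k, f k y = if k ∈ I then 0 else f k x := fun k => coeff_sub_proj hbi I x k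
    have hgr₂ : GreedySet f y Λ₂ := by
      intro n hn mm hmm
      have hnΛ : n ∈ Λ := (Finset.mem_sdiff.mp hn).1
      have hnI : n ∉ I := (Finset.mem_sdiff.mp hn).2
      rw [hcy n, if_neg hnI, hcy mm]
      split
      · rw [abs_zero]; exact abs_nonneg _
      · next hmmI =>
        have hmmΛ : mm ∉ Λ := fun hmem => hmm (Finset.mem_sdiff.mpr ⟨hmem, hmmI⟩)
        exact hgr n hnΛ mm hmmΛ
    have hPy : proj f e Λ₂ y = proj f e Λ₂ x := by
      unfold proj
      refine Finset.sum_congr rfl (fun n hn => ?_)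
      rw [hcy n, if_neg (Finset.mem_sdiff.mp hn).2]
    have hu1 : I ∪ Λ₂ = I ∪ Λ := Finset.union_sdiff_self_eq_union
    have hu2 : Λ ∪ D = Λ ∪ I := Finset.union_sdiff_self_eq_union
    have hd1 : Disjoint I Λ₂ := Finset.disjoint_sdiff
    have hd2 : Disjoint Λ D := Finset.disjoint_sdiff
    have e1 : proj f e I x + proj f e Λ₂ x = proj f e (I ∪ Λ) x := by
      unfold proj; rw [← Finset.sum_union hd1, hu1]
    have e2 : proj f e Λ x + proj f e D x = proj f e (I ∪ Λ) x := by
      unfold proj; rw [← Finset.sum_union hd2, hu2, Finset.union_comm]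
    have h3 : proj f e I x + proj f e Λ₂ x = proj f e Λ x + proj f e D x := by
      rw [e1, e2]
    have hdecomp : x - proj f e Λ x = (y - proj f e Λ₂ x) + proj f e D x := by
      rw [hy]
      apply eq_of_sub_eq_zero
      calc x - proj f e Λ x - ((x - proj f e I x - proj f e Λ₂ x) + proj f e D x)
          = (proj f e I x + proj f e Λ₂ x) - (proj f e Λ x + proj f e D x) := by abel
      _ = 0 := sub_eq_zero_of_eq h3
    have hb1 : ‖y - proj f e Λ₂ x‖ ≤ C * ‖y‖ := by
      rw [← hPy]; exact hq y Λ₂ hgr₂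
    have hlt2 : ∀ k ∈ Λ₂, ∀ d ∈ D, k < d := by
      intro k hk d hd
      have hkΛ : k ∈ Λ := (Finset.mem_sdiff.mp hk).1
      have hkI : k ∉ I := (Finset.mem_sdiff.mp hk).2
      have hkb : k ≤ b := hΛb k hkΛ
      have hka : k < a := by
        by_contra hcon
        exact hkI (Finset.mem_Icc.mpr ⟨not_lt.mp hcon, hkb⟩)
      have hda : a ≤ d := (Finset.mem_Icc.mp (Finset.mem_sdiff.mp hd).1).1
      omega
    have hcard2 : D.card ≤ Λ₂.card := by
      have q1 : D.card + (I ∩ Λ).card = I.card := by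
        rw [hDdef]; exact Finset.card_sdiff_add_card_inter I Λ
      have q2 : Λ₂.card + (Λ ∩ I).card = Λ.card := by
        rw [hΛ₂]; exact Finset.card_sdiff_add_card_inter Λ I
      have q3 : (I ∩ Λ).card = (Λ ∩ I).card := by rw [Finset.inter_comm]
      omega
    have hcoef : ∀ n ∈ D, ∀ k ∈ Λ₂, |f n x| ≤ |f k y| := by
      intro n hn k hk
      have hnΛ : n ∉ Λ := (Finset.mem_sdiff.mp hn).2
      have hkΛ : k ∈ Λ := (Finset.mem_sdiff.mp hk).1
      have hkI : k ∉ I := (Finset.mem_sdiff.mp hk).2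
      rw [hcy k, if_neg hkI]
      exact hgr k hkΛ n hnΛ
    have hb2 : ‖proj f e D x‖ ≤ 8 * C ^ 3 * (1 + C) * ‖y‖ :=
      main_est hbi hC hq hrc y Λ₂ D hgr₂ hlt2 hcard2 (fun n => f n x) hcoef
    calc ‖x - proj f e Λ x‖ = ‖(y - proj f e Λ₂ x) + proj f e D x‖ := by rw [hdecomp]
    _ ≤ ‖y - proj f e Λ₂ x‖ + ‖proj f e D x‖ := norm_add_le _ _
    _ ≤ C * ‖y‖ + 8 * C ^ 3 * (1 + C) * ‖y‖ := add_le_add hb1 hb2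
    _ = C' * ‖y‖ := by rw [hC']; ring
    _ = C' * ‖x - proj f e I x‖ := by rw [hy]

/-- Backward: SuppQG + RevConservative imply RPG. -/
lemma backward_dir (hbi : ∀ n m, f n (e m) = if n = m then (1 : ℝ) else 0)
    {C : ℝ} (hC : 1 ≤ C) (hq : SuppQG f e C) (hrc : RevConservative e C) :
    RPG f e (C + 8 * C ^ 3 * (1 + C)) := by
  intro x m Λ hm hgr
  set C' : ℝ := C + 8 * C ^ 3 * (1 + C) with hC'
  have hC'pos : 0 < C' := by rw [hC']; positivity
  refine le_mul_csInf ?_ hC'pos ?_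
  · exact ⟨‖x - proj f e ∅ x‖, ∅, by simp, by simp, rfl⟩
  rintro r ⟨A, hAcard, hAlt, rfl⟩
  set y : X := x - proj f e A x with hy
  have hdisj : ∀ n ∈ Λ, n ∉ A := by
    intro n hn hnA
    exact absurd (hAlt n hn n hnA) (lt_irrefl n)
  have hcy : ∀ k, f k y = if k ∈ A then 0 else f k x := fun k => coeff_sub_proj hbi A x k
  have hgrΛy : GreedySet f y Λ := by
    intro n hn mm hmm
    rw [hcy n, if_neg (hdisj n hn), hcy mm]
    split
    · rw [abs_zero]; exact abs_nonneg _
    · exact hgr n hn mm hmm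
  have hPy : proj f e Λ y = proj f e Λ x := by
    unfold proj
    refine Finset.sum_congr rfl (fun n hn => ?_)
    rw [hcy n, if_neg (hdisj n hn)]
  have hdecomp : x - proj f e Λ x = (y - proj f e Λ x) + proj f e A x := by
    rw [hy]; abel
  have hb1 : ‖y - proj f e Λ x‖ ≤ C * ‖y‖ := by
    rw [← hPy]; exact hq y Λ hgrΛy
  have hcoef : ∀ n ∈ A, ∀ k ∈ Λ, |f n x| ≤ |f k y| := by
    intro n hn k hk
    rw [hcy k, if_neg (hdisj k hk)]
    have hnΛ : n ∉ Λ := by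
      intro hmem
      exact absurd (hAlt n hmem n hn) (lt_irrefl n)
    exact hgr k hk n hnΛ
  have hb2 : ‖proj f e A x‖ ≤ 8 * C ^ 3 * (1 + C) * ‖y‖ :=
    main_est hbi hC hq hrc y Λ A hgrΛy hAlt (hm ▸ hAcard) (fun n => f n x) hcoef
  calc ‖x - proj f e Λ x‖ = ‖(y - proj f e Λ x) + proj f e A x‖ := by rw [hdecomp]
  _ ≤ ‖y - proj f e Λ x‖ + ‖proj f e A x‖ := norm_add_le _ _
  _ ≤ C * ‖y‖ + 8 * C ^ 3 * (1 + C) * ‖y‖ := add_le_add hb1 hb2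
  _ = C' * ‖y‖ := by rw [hC']; ring
  _ = C' * ‖x - proj f e A x‖ := by rw [hy]

end Aux

/-- a basis is RPG iff it satisfies the interval-based condition. -/
theorem stmt_3 [CompleteSpace X] (f : ℕ → X →L[ℝ] ℝ) (e : ℕ → X)
    (hb : BasisSystem f e) :
    (∃ C : ℝ, 1 ≤ C ∧ RPG f e C) ↔
      (∃ C : ℝ, 1 ≤ C ∧ ∀ (x : X) (m : ℕ) (Λ : Finset ℕ), Λ.card = m →
        GreedySet f x Λ → ‖x - proj f e Λ x‖ ≤ C * checkSigma f e Λ m x) := by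
  constructor
  · rintro ⟨C, hC, hrpg⟩
    have hq : SuppQG f e C := suppQG_of_rpg hC hrpg
    have hrc : RevConservative e C := revcons_of_rpg hb.biorth hC hrpg
    refine ⟨C + 8 * C ^ 3 * (1 + C), ?_, forward_dir hb.biorth hC hq hrc⟩
    nlinarith [pow_nonneg (by linarith : (0:ℝ) ≤ C) 3]
  · rintro ⟨C, hC, hcheck⟩
    have hq : SuppQG f e C := suppQG_of_check hC hcheck
    have hrc : RevConservative e C := revcons_of_check hb.biorth hC hcheck
    refine ⟨C + 8 * C ^ 3 * (1 + C), ?_, backward_dir hb.biorth hC hq hrc⟩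
    nlinarith [pow_nonneg (by linarith : (0:ℝ) ≤ C) 3]
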